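/- Strong duality for ℓ∞-norm minimization: for a full-rank matrix D ∈ ℂ^{M×N} (M ≤ N), y ∈ ℂ^M, and ε ≥ 0, the optimal value of min{‖x‖_∞ : ‖y − Dx‖₂ ≤ ε} equals the optimal value of max{Re(yᴴz) − ε‖z‖₂ : z ∈ ℂ^M, ‖Dᴴz‖₁ ≤ 1}. -/

import Mathlib

open scoped BigOperators Matrix

/-- Euclidean (ℓ₂) norm of a complex vector. -/
noncomputable def l2 {n : ℕ} (x : Fin n → ℂ) : ℝ := Real.sqrt (∑ i, ‖x i‖ ^ 2)

/-- ℓ∞ (maximum) norm of a complex vector. -/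
noncomputable def linf {n : ℕ} (x : Fin n → ℂ) : ℝ := ⨆ i, ‖x i‖

/-- ℓ₁ norm of a complex vector. -/
noncomputable def l1 {n : ℕ} (x : Fin n → ℂ) : ℝ := ∑ i, ‖x i‖

open scoped ComplexConjugate

lemma l2_nonneg {n : ℕ} (x : Fin n → ℂ) : 0 ≤ l2 x := Real.sqrt_nonneg _

lemma l2_eq_norm {n : ℕ} (x : EuclideanSpace ℂ (Fin n)) : l2 x = ‖x‖ :=
  (EuclideanSpace.norm_eq x).symm

lemma linf_nonneg {n : ℕ} (x : Fin n → ℂ) : 0 ≤ linf x :=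
  Real.iSup_nonneg fun i => norm_nonneg _

lemma l1_nonneg {n : ℕ} (x : Fin n → ℂ) : 0 ≤ l1 x :=
  Finset.sum_nonneg fun i _ => norm_nonneg _

lemma l2_zero {n : ℕ} : l2 (0 : Fin n → ℂ) = 0 := by simp [l2]

lemma norm_le_linf {n : ℕ} (x : Fin n → ℂ) (i : Fin n) : ‖x i‖ ≤ linf x :=
  le_ciSup (f := fun i => ‖x i‖) (Set.Finite.bddAbove (Set.finite_range _)) i

lemma l2_real_smul {n : ℕ} (c : ℝ) (hc : 0 ≤ c) (z : Fin n → ℂ) :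
    l2 (fun i => (c : ℂ) * z i) = c * l2 z := by
  unfold l2
  have : ∀ i : Fin n, ‖(c : ℂ) * z i‖ ^ 2 = c ^ 2 * ‖z i‖ ^ 2 := by
    intro i
    rw [norm_mul, Complex.norm_real, Real.norm_of_nonneg hc]; ring
  simp_rw [this, ← Finset.mul_sum]
  rw [Real.sqrt_mul (sq_nonneg c), Real.sqrt_sq hc]

lemma l1_real_smul {n : ℕ} (c : ℝ) (hc : 0 ≤ c) (z : Fin n → ℂ) :
    l1 (fun i => (c : ℂ) * z i) = c * l1 z := by
  unfold l1
  rw [Finset.mul_sum]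
  refine Finset.sum_congr rfl fun i _ => ?_
  rw [norm_mul, Complex.norm_real, Real.norm_of_nonneg hc]

lemma key_swap {m n : ℕ} (A : Matrix (Fin m) (Fin n) ℂ) (z : Fin m → ℂ) (x : Fin n → ℂ) :
    ∑ i, conj (z i) * (A.mulVec x i) = ∑ j, conj ((Aᴴ.mulVec z) j) * x j := by
  simp only [Matrix.mulVec, dotProduct, Matrix.conjTranspose_apply, map_sum, map_mul,
    Finset.mul_sum, Finset.sum_mul]
  rw [Finset.sum_comm]
  refine Finset.sum_congr rfl fun j _ => Finset.sum_congr rfl fun i _ => ?_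
  rw [show star (A i j) = conj (A i j) from rfl, Complex.conj_conj]
  ring

lemma inner_eq_sum {n : ℕ} (a b : EuclideanSpace ℂ (Fin n)) :
    (inner ℂ a b : ℂ) = ∑ i, conj (a i) * b i := by
  rw [PiLp.inner_apply]; exact Finset.sum_congr rfl fun i _ => by simp [mul_comm]

lemma re_inner_le {n : ℕ} (a b : EuclideanSpace ℂ (Fin n)) :
    ((inner ℂ a b : ℂ)).re ≤ ‖a‖ * ‖b‖ :=
  (Complex.re_le_norm _).trans (by exact norm_inner_le_norm a b)


lemma conj_sum_re {m : ℕ} (y z : Fin m → ℂ) :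
    (∑ i, conj (y i) * z i).re = (∑ i, conj (z i) * y i).re := by
  have : (∑ i, conj (y i) * z i) = conj (∑ i, conj (z i) * y i) := by
    rw [map_sum]
    exact Finset.sum_congr rfl fun i _ => by rw [map_mul, Complex.conj_conj]; ring
  rw [this, Complex.conj_re]

/-- Weak duality. -/
lemma weak_duality {M N : ℕ} (D : Matrix (Fin M) (Fin N) ℂ) (y : Fin M → ℂ) (ε : ℝ)
    (x : Fin N → ℂ) (z : Fin M → ℂ) (hx : l2 (y - D.mulVec x) ≤ ε)
    (hz : l1 (Dᴴ.mulVec z) ≤ 1) :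
    (∑ i, conj (y i) * z i).re - ε * l2 z ≤ linf x := by
  set w := Dᴴ.mulVec z with hw
  have h2 : ∑ i, conj (z i) * y i =
      (∑ i, conj (z i) * ((y - D.mulVec x) i)) + ∑ j, conj (w j) * x j := by
    rw [hw, ← key_swap, ← Finset.sum_add_distrib]
    refine Finset.sum_congr rfl fun i _ => ?_
    rw [Pi.sub_apply]; ring
  have hCS : (∑ i, conj (z i) * ((y - D.mulVec x) i)).re ≤ l2 z * l2 (y - D.mulVec x) := by
    have := re_inner_le ((WithLp.equiv 2 (Fin M → ℂ)).symm z)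
      ((WithLp.equiv 2 (Fin M → ℂ)).symm (y - D.mulVec x))
    rw [inner_eq_sum] at this
    rw [l2_eq_norm, l2_eq_norm]
    exact this
  have hsecond : (∑ j, conj (w j) * x j).re ≤ linf x := by
    rw [Complex.re_sum]
    calc ∑ j, (conj (w j) * x j).re ≤ ∑ j, ‖w j‖ * ‖x j‖ := by
          refine Finset.sum_le_sum fun j _ => ?_
          calc (conj (w j) * x j).re ≤ ‖conj (w j) * x j‖ := Complex.re_le_norm _
            _ = ‖w j‖ * ‖x j‖ := by
                rw [norm_mul, Complex.norm_conj]
      _ ≤ ∑ j, ‖w j‖ * linf x := Finset.sum_le_sum fun j _ =>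
            mul_le_mul_of_nonneg_left (norm_le_linf x j) (norm_nonneg _)
      _ = l1 w * linf x := by rw [l1, Finset.sum_mul]
      _ ≤ 1 * linf x := mul_le_mul_of_nonneg_right hz (linf_nonneg x)
      _ = linf x := one_mul _
  have hl2z : 0 ≤ l2 z := l2_nonneg z
  have := conj_sum_re y z
  rw [this, h2, Complex.add_re]
  have hx' : l2 z * l2 (y - D.mulVec x) ≤ l2 z * ε := mul_le_mul_of_nonneg_left hx hl2z
  nlinarith [hCS, hsecond]

lemma orth_ker_le_range_adjoint {m n : ℕ}
    (L : EuclideanSpace ℂ (Fin n) →ₗ[ℂ] EuclideanSpace ℂ (Fin m)) :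
    (LinearMap.ker L)ᗮ = LinearMap.range (LinearMap.adjoint L) := by
  have h : LinearMap.ker L = (LinearMap.range (LinearMap.adjoint L))ᗮ := by
    ext x
    simp only [LinearMap.mem_ker, Submodule.mem_orthogonal]
    constructor
    · rintro hx u ⟨z, rfl⟩
      rw [LinearMap.adjoint_inner_left, hx, inner_zero_right]
    · intro h
      have := h (LinearMap.adjoint L (L x)) ⟨L x, rfl⟩
      rwa [LinearMap.adjoint_inner_left, inner_self_eq_zero] at this
  rw [h, Submodule.orthogonal_orthogonal]

lemma surj_of_rank {M N : ℕ} (D : Matrix (Fin M) (Fin N) ℂ) (hrank : D.rank = M) :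
    Function.Surjective (D.mulVec) := by
  have h1 : LinearMap.range D.mulVecLin = ⊤ := by
    apply Submodule.eq_top_of_finrank_eq
    rw [show Module.finrank ℂ (LinearMap.range D.mulVecLin) = D.rank from rfl, hrank]
    simp [Module.finrank_fin_fun]
  intro v
  obtain ⟨x, hx⟩ := LinearMap.range_eq_top.mp h1 v
  exact ⟨x, hx⟩

lemma dual_ge {M N : ℕ} (D : Matrix (Fin M) (Fin N) ℂ) (y : Fin M → ℂ) (ε : ℝ)
    (hε : 0 ≤ ε) (hsurj : Function.Surjective D.mulVec) (t : ℝ) (ht : 0 ≤ t)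
    (hN : 0 < N) (htlt : ∀ x : Fin N → ℂ, l2 (y - D.mulVec x) ≤ ε → t < linf x) :
    ∃ z : Fin M → ℂ, l1 (Dᴴ.mulVec z) ≤ 1 ∧
      t < (∑ i, conj (y i) * z i).re - ε * l2 z := by
  classical
  haveI : Nonempty (Fin N) := Fin.pos_iff_nonempty.mp hN
  obtain ⟨x₀, hx₀⟩ := hsurj y
  set L : EuclideanSpace ℂ (Fin N) →ₗ[ℂ] EuclideanSpace ℂ (Fin M) := Matrix.toEuclideanLin D
    with hL
  set A : Set (EuclideanSpace ℂ (Fin N)) := {x | ∀ j, ‖x j‖ ≤ t} with hA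
  set B : Set (EuclideanSpace ℂ (Fin N)) := {x | l2 (y - D.mulVec x) ≤ ε} with hB
  -- basic properties
  have hAconv : Convex ℝ A := by
    intro p hp q hq a b ha hb hab
    intro j
    have : (a • p + b • q) j = a • p j + b • q j := rfl
    rw [this]
    calc ‖a • p j + b • q j‖ ≤ ‖a • p j‖ + ‖b • q j‖ := norm_add_le _ _
      _ = a * ‖p j‖ + b * ‖q j‖ := by
          rw [norm_smul, norm_smul, Real.norm_of_nonneg ha, Real.norm_of_nonneg hb]
      _ ≤ a * t + b * t := add_le_add (mul_le_mul_of_nonneg_left (hp j) ha)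
          (mul_le_mul_of_nonneg_left (hq j) hb)
      _ = t := by rw [← add_mul, hab, one_mul]
  have hAcomp : IsCompact A := by
    refine Metric.isCompact_of_isClosed_isBounded ?_ ?_
    · have : A = ⋂ j, {x : EuclideanSpace ℂ (Fin N) | ‖x j‖ ≤ t} := by
        ext x; simp [hA, Set.mem_iInter]
      rw [this]
      refine isClosed_iInter fun j => ?_
      have hc : Continuous fun x : EuclideanSpace ℂ (Fin N) => ‖x j‖ :=
        (continuous_norm.comp ((continuous_apply j).comp (PiLp.continuous_ofLp 2 _)))
      exact isClosed_le hc continuous_const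
    · refine Bornology.IsBounded.subset (Metric.isBounded_closedBall
        (x := (0 : EuclideanSpace ℂ (Fin N))) (r := Real.sqrt (N * t ^ 2))) ?_
      intro x hx
      rw [Metric.mem_closedBall, dist_zero_right, EuclideanSpace.norm_eq]
      refine Real.sqrt_le_sqrt ?_
      calc ∑ j, ‖x j‖ ^ 2 ≤ ∑ _j : Fin N, t ^ 2 := Finset.sum_le_sum fun j _ =>
            pow_le_pow_left₀ (norm_nonneg _) (hx j) 2
        _ = N * t ^ 2 := by simp
  have hkey : ∀ (x₁ x₂ : Fin N → ℂ) (a b : ℝ), a + b = 1 →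
      y - D.mulVec (a • x₁ + b • x₂) =
        a • (y - D.mulVec x₁) + b • (y - D.mulVec x₂) := by
    intro x₁ x₂ a b hab
    rw [Matrix.mulVec_add, Matrix.mulVec_smul, Matrix.mulVec_smul]
    rw [smul_sub, smul_sub]
    rw [show a • y - a • D.mulVec x₁ + (b • y - b • D.mulVec x₂) =
      (a + b) • y - (a • D.mulVec x₁ + b • D.mulVec x₂) from by
        rw [add_smul]; abel]
    rw [hab, one_smul]
  have hBconv : Convex ℝ B := by
    intro p hp q hq a b ha hb hab
    show l2 (y - D.mulVec (a • p + b • q)) ≤ ε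
    rw [hkey p q a b hab]
    have : l2 (a • (y - D.mulVec p) + b • (y - D.mulVec q)) =
        ‖a • ((WithLp.equiv 2 (Fin M → ℂ)).symm (y - D.mulVec p)) +
          b • ((WithLp.equiv 2 (Fin M → ℂ)).symm (y - D.mulVec q))‖ := by
      rw [l2_eq_norm]; rfl
    rw [this]
    calc ‖_ + _‖ ≤ ‖a • ((WithLp.equiv 2 (Fin M → ℂ)).symm (y - D.mulVec p))‖ +
          ‖b • ((WithLp.equiv 2 (Fin M → ℂ)).symm (y - D.mulVec q))‖ := norm_add_le _ _
      _ = a * l2 (y - D.mulVec p) + b * l2 (y - D.mulVec q) := by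
          rw [norm_smul, norm_smul, Real.norm_of_nonneg ha, Real.norm_of_nonneg hb,
            l2_eq_norm, l2_eq_norm]
          rfl
      _ ≤ a * ε + b * ε := add_le_add (mul_le_mul_of_nonneg_left hp ha)
          (mul_le_mul_of_nonneg_left hq hb)
      _ = ε := by rw [← add_mul, hab, one_mul]
  have hBclosed : IsClosed B := by
    have hcont : Continuous fun x : EuclideanSpace ℂ (Fin N) => l2 (y - D.mulVec x) := by
      have h1 : Continuous fun x : EuclideanSpace ℂ (Fin N) =>
          ((WithLp.equiv 2 (Fin M → ℂ)).symm (y - D.mulVec x)) := by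
        have : Continuous fun x : EuclideanSpace ℂ (Fin N) =>
            ((WithLp.equiv 2 (Fin M → ℂ)).symm y - L x) := by
          exact continuous_const.sub L.continuous_of_finiteDimensional
        exact this
      have : (fun x : EuclideanSpace ℂ (Fin N) => l2 (y - D.mulVec x)) =
          fun x : EuclideanSpace ℂ (Fin N) => ‖(WithLp.equiv 2 (Fin M → ℂ)).symm (y - D.mulVec x)‖ := by
        funext x; rw [l2_eq_norm]; rfl
      rw [this]
      exact h1.norm
    exact isClosed_le hcont continuous_const
  have hx₀B : ((WithLp.equiv 2 (Fin N → ℂ)).symm x₀) ∈ B := by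
    show l2 (y - D.mulVec x₀) ≤ ε
    rw [hx₀, sub_self, l2_zero]; exact hε
  have hdisj : Disjoint A B := by
    rw [Set.disjoint_left]
    intro x hxA hxB
    have h1 : t < linf x := htlt x hxB
    have h2 : linf x ≤ t := ciSup_le hxA
    exact absurd h1 (not_lt.mpr h2)
  obtain ⟨f, u, v, hfA, huv, hfB⟩ :=
    geometric_hahn_banach_compact_closed hAconv hAcomp hBconv hBclosed hdisj
  -- linear functional representation
  set w : Fin N → ℂ := fun j =>
    ((f (EuclideanSpace.single j 1) : ℝ) : ℂ) +
      ((f (EuclideanSpace.single j Complex.I) : ℝ) : ℂ) * Complex.I with hwdef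
  have hsingle : ∀ (j : Fin N) (c : ℂ),
      f (EuclideanSpace.single j c) = (conj (w j) * c).re := by
    intro j c
    have hc : EuclideanSpace.single j c =
        c.re • EuclideanSpace.single j (1 : ℂ) + c.im • EuclideanSpace.single j Complex.I := by
      ext i
      show EuclideanSpace.single j c i =
        c.re • EuclideanSpace.single j (1 : ℂ) i + c.im • EuclideanSpace.single j Complex.I i
      simp only [EuclideanSpace.single_apply]
      by_cases h : i = j
      · simp [h, Complex.real_smul, Complex.re_add_im]
      · simp [h]
    rw [hc, map_add, map_smul, map_smul, smul_eq_mul, smul_eq_mul, hwdef]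
    simp only [map_add, map_mul, Complex.conj_ofReal, Complex.conj_I, Complex.add_re,
      Complex.mul_re, Complex.ofReal_re, Complex.ofReal_im, Complex.I_re, Complex.I_im,
      Complex.neg_re, Complex.neg_im, Complex.mul_im, Complex.sub_re, Complex.sub_im,
      Complex.add_im, mul_neg, neg_neg, neg_zero]
    ring
  have hrepr : ∀ x : EuclideanSpace ℂ (Fin N), f x = ∑ j, (conj (w j) * x j).re := by
    intro x
    have hx : x = ∑ j, EuclideanSpace.single j (x j) := by
      ext i
      show x i = (∑ j, EuclideanSpace.single j (x j)) i
      rw [WithLp.ofLp_sum, Finset.sum_apply]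
      simp [EuclideanSpace.single_apply]
    conv_lhs => rw [hx]
    rw [map_sum]
    exact Finset.sum_congr rfl fun j _ => hsingle j (x j)
  -- the element of A realizing value t * l1 w
  set xs : EuclideanSpace ℂ (Fin N) := WithLp.toLp 2 fun j =>
    if w j = 0 then 0 else ((t / ‖w j‖ : ℝ) : ℂ) * w j with hxs
  have hxsA : xs ∈ A := by
    intro j
    show ‖if w j = 0 then 0 else ((t / ‖w j‖ : ℝ) : ℂ) * w j‖ ≤ t
    by_cases h : w j = 0
    · simp [h, ht]
    · rw [if_neg h, norm_mul, Complex.norm_real,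
        Real.norm_of_nonneg (div_nonneg ht (norm_nonneg _)),
        div_mul_cancel₀ _ (norm_ne_zero_iff.mpr h)]
  have hfxs : f xs = t * l1 w := by
    rw [hrepr, l1, Finset.mul_sum]
    refine Finset.sum_congr rfl fun j _ => ?_
    show (conj (w j) * (if w j = 0 then 0 else ((t / ‖w j‖ : ℝ) : ℂ) * w j)).re = t * ‖w j‖
    by_cases h : w j = 0
    · simp [h]
    · rw [if_neg h]
      have : conj (w j) * (((t / ‖w j‖ : ℝ) : ℂ) * w j)
          = ((t / ‖w j‖ * ‖w j‖ ^ 2 : ℝ) : ℂ) := by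
        rw [show conj (w j) * (((t / ‖w j‖ : ℝ) : ℂ) * w j)
            = ((t / ‖w j‖ : ℝ) : ℂ) * (w j * conj (w j)) from by ring,
          Complex.mul_conj]
        rw [show (Complex.normSq (w j) : ℂ) = ((‖w j‖ ^ 2 : ℝ) : ℂ) from by
          rw [Complex.normSq_eq_norm_sq]]
        push_cast
        ring
      rw [this, Complex.ofReal_re]
      have habs : ‖w j‖ ≠ 0 := by simpa using h
      field_simp
  have hu : t * l1 w < u := hfxs ▸ hfA xs hxsA
  -- w is orthogonal to the kernel
  have hmemB : ∀ e : Fin M → ℂ, l2 e ≤ ε → ∀ b : Fin N → ℂ, D.mulVec b = y - e →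
      (WithLp.toLp 2 b : EuclideanSpace ℂ (Fin N)) ∈ B := by
    intro e he b hb
    show l2 (y - D.mulVec b) ≤ ε
    rw [hb, sub_sub_cancel]
    exact he
  have hker : ∀ k : EuclideanSpace ℂ (Fin N), D.mulVec k = 0 → f k = 0 := by
    intro k hk
    by_contra hfk
    set x₀e : EuclideanSpace ℂ (Fin N) := WithLp.toLp 2 x₀ with hx₀e
    have hmem : ∀ s : ℝ, (x₀e + s • k) ∈ B := by
      intro s
      refine hmemB 0 (by rw [l2_zero]; exact hε) _ ?_
      show D.mulVec (x₀ + s • (WithLp.ofLp k)) = y - 0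
      rw [Matrix.mulVec_add, Matrix.mulVec_smul, hx₀]
      rw [show D.mulVec (WithLp.ofLp k) = 0 from hk, smul_zero, add_zero, sub_zero]
    have hs := hfB _ (hmem ((v - f x₀e - 1) / f k))
    rw [map_add, map_smul, smul_eq_mul, div_mul_cancel₀ _ hfk] at hs
    linarith
  -- w is orthogonal to the kernel of L, hence in the range of the adjoint
  set we : EuclideanSpace ℂ (Fin N) := WithLp.toLp 2 w with hwe
  have hfinner : ∀ x : EuclideanSpace ℂ (Fin N), f x = ((inner ℂ we x : ℂ)).re := by
    intro x
    rw [hrepr x, inner_eq_sum, Complex.re_sum]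
  have hworth : we ∈ (LinearMap.ker L)ᗮ := by
    rw [Submodule.mem_orthogonal]
    intro k hkK
    have hk : D.mulVec k = 0 := congrArg WithLp.ofLp (LinearMap.mem_ker.mp hkK)
    have h1 : ((inner ℂ we k : ℂ)).re = 0 := by rw [← hfinner]; exact hker k hk
    have hk2 : D.mulVec ((Complex.I • k : EuclideanSpace ℂ (Fin N))) = 0 := by
      show D.mulVec (Complex.I • (WithLp.ofLp k)) = 0
      rw [Matrix.mulVec_smul]
      rw [show D.mulVec (WithLp.ofLp k) = 0 from hk, smul_zero]
    have h2 : ((inner ℂ we (Complex.I • k) : ℂ)).re = 0 := by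
      rw [← hfinner]; exact hker _ hk2
    rw [inner_smul_right] at h2
    rw [inner_eq_zero_symm]
    apply Complex.ext
    · exact h1
    · have : (Complex.I * (inner ℂ we k : ℂ)).re = -((inner ℂ we k : ℂ)).im := by
        rw [Complex.mul_re]; simp
      rw [this] at h2
      simpa using h2
  have hrange : ∃ z : EuclideanSpace ℂ (Fin M), LinearMap.adjoint L z = we := by
    rw [orth_ker_le_range_adjoint L] at hworth
    exact hworth
  obtain ⟨z, hz⟩ := hrange
  have hwz : w = Dᴴ.mulVec z := by
    have h1 : Matrix.toEuclideanLin Dᴴ z = we := by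
      rw [Matrix.toEuclideanLin_conjTranspose_eq_adjoint]
      exact hz
    exact congrArg WithLp.ofLp h1.symm
  have hwne : ∃ j, w j ≠ 0 := by
    by_contra h
    push_neg at h
    have hw0 : ∀ x : EuclideanSpace ℂ (Fin N), f x = 0 := by
      intro x; rw [hrepr]; simp [h]
    have hmemA : (0 : EuclideanSpace ℂ (Fin N)) ∈ A := by
      intro j
      show ‖(0 : EuclideanSpace ℂ (Fin N)) j‖ ≤ t
      simpa using ht
    have h1 := hfA 0 hmemA
    have h2 := hfB _ hx₀B
    rw [hw0] at h1
    rw [hw0] at h2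
    linarith
  have hl1pos : 0 < l1 w := by
    obtain ⟨j, hj⟩ := hwne
    calc (0:ℝ) < ‖w j‖ := norm_pos_iff.mpr hj
      _ ≤ l1 w := Finset.single_le_sum (f := fun j => ‖w j‖)
          (fun i _ => norm_nonneg _) (Finset.mem_univ j)
  have hzne : z ≠ 0 := by
    rintro rfl
    rw [map_zero] at hz
    obtain ⟨j, hj⟩ := hwne
    exact hj (congrArg (fun v : EuclideanSpace ℂ (Fin N) => v j) hz.symm)
  -- the dual value bound
  have hz2 : l2 z = ‖z‖ := l2_eq_norm z
  have hnz : ‖z‖ ≠ 0 := norm_ne_zero_iff.mpr hzne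
  have hbound : v < (∑ i, conj (y i) * z i).re - ε * l2 z := by
    set c : ℝ := ε / ‖z‖ with hc
    have hcnn : 0 ≤ c := div_nonneg hε (norm_nonneg _)
    set e : Fin M → ℂ := fun i => (c : ℂ) * z i with he
    have hel2 : l2 e ≤ ε := by
      rw [he, l2_real_smul c hcnn, hz2, hc, div_mul_cancel₀ _ hnz]
    obtain ⟨b, hDb⟩ := hsurj (y - e)
    have hbB := hmemB e hel2 b hDb
    have hfb := hfB _ hbB
    have hLb : L (WithLp.toLp 2 b)
        = WithLp.toLp 2 (y - e) := congrArg (WithLp.toLp 2) hDb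
    have hfbeq : f (WithLp.toLp 2 b)
        = (∑ i, conj (z i) * ((y - e) i)).re := by
      rw [hfinner, ← hz, LinearMap.adjoint_inner_left, hLb, inner_eq_sum]
    have h1 : ∑ i, conj (z i) * ((y - e) i)
        = (∑ i, conj (z i) * y i) - (c:ℂ) * ∑ i, conj (z i) * z i := by
      rw [Finset.mul_sum, ← Finset.sum_sub_distrib]
      refine Finset.sum_congr rfl fun i _ => ?_
      rw [Pi.sub_apply, he]
      ring
    have h2 : ∑ i, conj (z i) * z i = ((‖z‖ ^ 2 : ℝ) : ℂ) := by
      rw [← inner_eq_sum z z, inner_self_eq_norm_sq_to_K]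
      norm_cast
    have h3 : ((c:ℂ) * ((‖z‖ ^ 2 : ℝ) : ℂ)).re = ε * ‖z‖ := by
      rw [← Complex.ofReal_mul, Complex.ofReal_re, hc]
      field_simp
    rw [hfbeq, h1, Complex.sub_re, h2, h3, ← conj_sum_re y z, ← hz2] at hfb
    exact hfb
  have hmain : t * l1 w < (∑ i, conj (y i) * z i).re - ε * l2 z :=
    lt_trans (lt_trans hu huv) hbound
  set c2 : ℝ := (l1 w)⁻¹ with hc2
  have hc2pos : 0 < c2 := inv_pos.mpr hl1pos
  have h6 : c2 * l1 w = 1 := inv_mul_cancel₀ (ne_of_gt hl1pos)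
  refine ⟨fun i => (c2:ℂ) * z i, ?_, ?_⟩
  · have heq : Dᴴ.mulVec (fun i => (c2:ℂ) * z i) = fun j => (c2:ℂ) * w j := by
      rw [hwz]
      rw [show (fun i => (c2:ℂ) * z i) = ((c2:ℂ) • (WithLp.ofLp z)) from rfl,
        Matrix.mulVec_smul]
      rfl
    rw [heq, l1_real_smul c2 hc2pos.le, h6]
  · have h4 : (∑ i, conj (y i) * ((c2:ℂ) * z i)) = (c2:ℂ) * ∑ i, conj (y i) * z i := by
      rw [Finset.mul_sum]
      exact Finset.sum_congr rfl fun i _ => by ring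
    rw [h4, Complex.re_ofReal_mul, l2_real_smul c2 hc2pos.le]
    have h5 := mul_lt_mul_of_pos_left hmain hc2pos
    have h7 : c2 * (t * l1 w) = t := by
      rw [mul_comm t, ← mul_assoc, h6, one_mul]
    rw [h7] at h5
    calc t < c2 * ((∑ i, conj (y i) * z i).re - ε * l2 z) := h5
      _ = c2 * (∑ i, conj (y i) * z i).re - ε * (c2 * l2 z) := by ring

/-- Strong duality for ℓ∞-norm minimization. -/
theorem strong_duality {M N : ℕ} (D : Matrix (Fin M) (Fin N) ℂ) (y : Fin M → ℂ) (ε : ℝ)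
    (hMN : M ≤ N) (hrank : D.rank = M) (hε : 0 ≤ ε) :
    sInf {t : ℝ | ∃ x : Fin N → ℂ, l2 (y - D.mulVec x) ≤ ε ∧ t = linf x} =
    sSup {t : ℝ | ∃ z : Fin M → ℂ, l1 (D.conjTranspose.mulVec z) ≤ 1 ∧
      t = (∑ i, starRingEnd ℂ (y i) * z i).re - ε * l2 z} := by
  classical
  set S := {t : ℝ | ∃ x : Fin N → ℂ, l2 (y - D.mulVec x) ≤ ε ∧ t = linf x} with hS
  set T := {t : ℝ | ∃ z : Fin M → ℂ, l1 (D.conjTranspose.mulVec z) ≤ 1 ∧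
      t = (∑ i, starRingEnd ℂ (y i) * z i).re - ε * l2 z} with hT
  have hsurj : Function.Surjective D.mulVec := surj_of_rank D hrank
  obtain ⟨x₀, hx₀⟩ := hsurj y
  have hx₀feas : l2 (y - D.mulVec x₀) ≤ ε := by rw [hx₀, sub_self, l2_zero]; exact hε
  have hSne : S.Nonempty := ⟨linf x₀, x₀, hx₀feas, rfl⟩
  have hbddS : BddBelow S := by
    refine ⟨0, fun s hs => ?_⟩
    obtain ⟨x, _, rfl⟩ := hs
    exact linf_nonneg x
  have h0T : (0:ℝ) ∈ T := by
    refine ⟨0, ?_, ?_⟩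
    · rw [Matrix.mulVec_zero]
      simp [l1]
    · simp [l2]
  have hweak : ∀ d ∈ T, ∀ s ∈ S, d ≤ s := by
    rintro d ⟨z, hz1, rfl⟩ s ⟨x, hx1, rfl⟩
    exact weak_duality D y ε x z hx1 hz1
  have hbddT : BddAbove T :=
    ⟨linf x₀, fun d hd => hweak d hd _ ⟨x₀, hx₀feas, rfl⟩⟩
  apply le_antisymm
  · refine le_of_forall_lt fun t ht => ?_
    rcases lt_or_ge t 0 with h | h
    · exact lt_csSup_of_lt hbddT h0T h
    · rcases Nat.eq_zero_or_pos N with hN | hN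
      · exfalso
        have hNempty : IsEmpty (Fin N) := by rw [hN]; exact Fin.isEmpty'
        have hl0 : linf x₀ = 0 := by
          rw [linf, Real.iSup_of_isEmpty]
        have h0S : (0:ℝ) ∈ S := ⟨x₀, hx₀feas, hl0.symm⟩
        have : sInf S ≤ 0 := csInf_le hbddS h0S
        linarith [ht, h, this]
      · have hstrict : ∀ x : Fin N → ℂ, l2 (y - D.mulVec x) ≤ ε → t < linf x :=
          fun x hx => lt_of_lt_of_le ht (csInf_le hbddS ⟨x, hx, rfl⟩)
        obtain ⟨z, hz1, hz2⟩ := dual_ge D y ε hε hsurj t h hN hstrict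
        exact lt_csSup_of_lt hbddT ⟨z, hz1, rfl⟩ hz2
  · exact csSup_le ⟨0, h0T⟩ fun d hd => le_csInf hSne fun s hs => hweak d hd s hs
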